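/- arXiv:1005.1625 — 2 statements merged into one kernel-verified Lean document; each statement's English description precedes it below -/
import Mathlib

section
/- (Napoleon's Theorem, inner case.) Let A₁', B₁', C₁' be an overlapping Napoleon configuration for a nondegenerate triangle ABC in the Euclidean plane, and let G₁', G₂', G₃' be the centroids of the triangles A₁'BC, AB₁'C, ABC₁' respectively. Then the triangle G₁'G₂'G₃' is equilateral (dist G₁' G₂' = dist G₂' G₃' = dist G₃' G₁') and its centroid (G₁'+G₂'+G₃')/3 coincides with the centroid G = (A+B+C)/3 of triangle ABC. -/
open EuclideanGeometry AffineSubspace MeasureTheory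

private lemma dist_sq_coords (x y : EuclideanSpace ℝ (Fin 2)) :
    dist x y ^ 2 = (x 0 - y 0) ^ 2 + (x 1 - y 1) ^ 2 := by
  rw [EuclideanSpace.dist_eq, Real.sq_sqrt (by positivity)]
  simp [Fin.sum_univ_two, Real.dist_eq, sq_abs]

private lemma dist_eq_of_sq {a b c d : EuclideanSpace ℝ (Fin 2)}
    (h : dist a b ^ 2 = dist c d ^ 2) : dist a b = dist c d := by
  have := congrArg Real.sqrt h
  rwa [Real.sqrt_sq dist_nonneg, Real.sqrt_sq dist_nonneg] at this

private lemma cross_sign_of_sSameSide (P Q x y : EuclideanSpace ℝ (Fin 2)) (hPQ : P ≠ Q)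
    (h : (affineSpan ℝ {P, Q}).SSameSide x y) :
    0 < ((Q 0 - P 0) * (x 1 - P 1) - (Q 1 - P 1) * (x 0 - P 0)) *
        ((Q 0 - P 0) * (y 1 - P 1) - (Q 1 - P 1) * (y 0 - P 0)) := by
  have hne : Q 0 - P 0 ≠ 0 ∨ Q 1 - P 1 ≠ 0 := by
    by_contra hc
    push_neg at hc
    apply hPQ
    have h0 : P 0 = Q 0 := by linarith [hc.1]
    have h1 : P 1 = Q 1 := by linarith [hc.2]
    ext i
    fin_cases i
    · exact h0
    · exact h1
  -- membership implies cross = 0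
  have hzero : ∀ z : EuclideanSpace ℝ (Fin 2), z ∈ affineSpan ℝ {P, Q} →
      (Q 0 - P 0) * (z 1 - P 1) - (Q 1 - P 1) * (z 0 - P 0) = 0 := by
    intro z hz
    have hz' : (z - P) +ᵥ P ∈ affineSpan ℝ ({P, Q} : Set (EuclideanSpace ℝ (Fin 2))) := by
      simpa using hz
    obtain ⟨r, hr⟩ := vadd_left_mem_affineSpan_pair.mp hz'
    have h0 : r * (Q 0 - P 0) = z 0 - P 0 := by
      have := congrArg (· 0) hr
      simpa [vsub_eq_sub] using this
    have h1 : r * (Q 1 - P 1) = z 1 - P 1 := by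
      have := congrArg (· 1) hr
      simpa [vsub_eq_sub] using this
    rw [← h0, ← h1]; ring
  -- cross = 0 implies membership
  have hmem : ∀ z : EuclideanSpace ℝ (Fin 2),
      (Q 0 - P 0) * (z 1 - P 1) - (Q 1 - P 1) * (z 0 - P 0) = 0 →
      z ∈ affineSpan ℝ {P, Q} := by
    intro z hz
    have hz' : (z - P) +ᵥ P ∈ affineSpan ℝ ({P, Q} : Set (EuclideanSpace ℝ (Fin 2))) → 
        z ∈ affineSpan ℝ {P, Q} := by
      intro h; simpa using h
    apply hz'
    rw [vadd_left_mem_affineSpan_pair]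
    rcases hne with h0 | h1
    · refine ⟨(z 0 - P 0) / (Q 0 - P 0), ?_⟩
      ext i
      fin_cases i
      · show (z 0 - P 0) / (Q 0 - P 0) * (Q 0 - P 0) = z 0 - P 0
        field_simp
      · show (z 0 - P 0) / (Q 0 - P 0) * (Q 1 - P 1) = z 1 - P 1
        field_simp
        linear_combination -hz
    · refine ⟨(z 1 - P 1) / (Q 1 - P 1), ?_⟩
      ext i
      fin_cases i
      · show (z 1 - P 1) / (Q 1 - P 1) * (Q 0 - P 0) = z 0 - P 0
        field_simp
        linear_combination hz
      · show (z 1 - P 1) / (Q 1 - P 1) * (Q 1 - P 1) = z 1 - P 1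
        field_simp
  obtain ⟨p₁, hp₁, p₂, hp₂, hray⟩ := h.1
  have hfx : (Q 0 - P 0) * (x 1 - P 1) - (Q 1 - P 1) * (x 0 - P 0) ≠ 0 :=
    fun hc => h.2.1 (hmem x hc)
  have hfy : (Q 0 - P 0) * (y 1 - P 1) - (Q 1 - P 1) * (y 0 - P 0) ≠ 0 :=
    fun hc => h.2.2 (hmem y hc)
  obtain hx0 | hy0 | ⟨r, s, hr, hs, hrs⟩ := hray
  · exact absurd ((vsub_eq_zero_iff_eq.mp hx0) ▸ hp₁) h.2.1
  · exact absurd ((vsub_eq_zero_iff_eq.mp hy0) ▸ hp₂) h.2.2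
  · have h0 : r * (x 0 - p₁ 0) = s * (y 0 - p₂ 0) := by
      have := congrArg (· 0) hrs
      simpa [vsub_eq_sub] using this
    have h1 : r * (x 1 - p₁ 1) = s * (y 1 - p₂ 1) := by
      have := congrArg (· 1) hrs
      simpa [vsub_eq_sub] using this
    have hz₁ := hzero p₁ hp₁
    have hz₂ := hzero p₂ hp₂
    set fx := (Q 0 - P 0) * (x 1 - P 1) - (Q 1 - P 1) * (x 0 - P 0) with hfx_def
    set fy := (Q 0 - P 0) * (y 1 - P 1) - (Q 1 - P 1) * (y 0 - P 0) with hfy_def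
    have key : r * fx = s * fy := by
      rw [hfx_def, hfy_def]
      linear_combination (Q 0 - P 0) * h1 - (Q 1 - P 1) * h0 + r * hz₁ - s * hz₂
    have key2 : r * (fx * fy) = s * (fy * fy) := by linear_combination fy * key
    nlinarith [mul_pos hs (mul_self_pos.mpr hfy), hr]

private lemma apex_solve (p0 p1 q0 q1 x0 x1 w0 w1 : ℝ)
    (e1 : (x0 - p0) ^ 2 + (x1 - p1) ^ 2 = (p0 - q0) ^ 2 + (p1 - q1) ^ 2)
    (e2 : (x0 - q0) ^ 2 + (x1 - q1) ^ 2 = (p0 - q0) ^ 2 + (p1 - q1) ^ 2)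
    (s : 0 < ((q0 - p0) * (x1 - p1) - (q1 - p1) * (x0 - p0)) *
        ((q0 - p0) * (w1 - p1) - (q1 - p1) * (w0 - p0))) :
    ∃ t : ℝ, t ^ 2 = 3 / 4 ∧
      0 < t * ((q0 - p0) * (w1 - p1) - (q1 - p1) * (w0 - p0)) ∧
      x0 = (p0 + q0) / 2 - t * (q1 - p1) ∧ x1 = (p1 + q1) / 2 + t * (q0 - p0) := by
  have hc : ((q0 - p0) * (x1 - p1) - (q1 - p1) * (x0 - p0)) ≠ 0 :=
    (mul_ne_zero_iff.mp s.ne').1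
  have hLpos : 0 < (p0 - q0) ^ 2 + (p1 - q1) ^ 2 := by
    by_contra hLn
    push_neg at hLn
    have h0 : q0 - p0 = 0 := by nlinarith [sq_nonneg (p0 - q0), sq_nonneg (p1 - q1)]
    have h1 : q1 - p1 = 0 := by nlinarith [sq_nonneg (p0 - q0), sq_nonneg (p1 - q1)]
    apply hc
    rw [h0, h1]; ring
  have hL0 : ((p0 - q0) ^ 2 + (p1 - q1) ^ 2) ≠ 0 := hLpos.ne'
  have hdot : (q0 - p0) * (x0 - p0) + (q1 - p1) * (x1 - p1) =
      ((p0 - q0) ^ 2 + (p1 - q1) ^ 2) / 2 := by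
    linear_combination (e1 - e2) / 2
  refine ⟨((q0 - p0) * (x1 - p1) - (q1 - p1) * (x0 - p0)) /
      ((p0 - q0) ^ 2 + (p1 - q1) ^ 2), ?_, ?_, ?_, ?_⟩
  · rw [div_pow, div_eq_iff (by positivity)]
    linear_combination ((p0 - q0) ^ 2 + (p1 - q1) ^ 2) * e1 -
      ((q0 - p0) * (x0 - p0) + (q1 - p1) * (x1 - p1) +
        ((p0 - q0) ^ 2 + (p1 - q1) ^ 2) / 2) * hdot
  · have heq : ((q0 - p0) * (x1 - p1) - (q1 - p1) * (x0 - p0)) /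
        ((p0 - q0) ^ 2 + (p1 - q1) ^ 2) *
        ((q0 - p0) * (w1 - p1) - (q1 - p1) * (w0 - p0)) =
        (((q0 - p0) * (x1 - p1) - (q1 - p1) * (x0 - p0)) *
          ((q0 - p0) * (w1 - p1) - (q1 - p1) * (w0 - p0))) /
        ((p0 - q0) ^ 2 + (p1 - q1) ^ 2) := by ring
    rw [heq]
    exact div_pos s hLpos
  · have h2 : (p0 + q0) / 2 - ((q0 - p0) * (x1 - p1) - (q1 - p1) * (x0 - p0)) /
        ((p0 - q0) ^ 2 + (p1 - q1) ^ 2) * (q1 - p1) =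
        (((p0 - q0) ^ 2 + (p1 - q1) ^ 2) * ((p0 + q0) / 2) -
          ((q0 - p0) * (x1 - p1) - (q1 - p1) * (x0 - p0)) * (q1 - p1)) /
        ((p0 - q0) ^ 2 + (p1 - q1) ^ 2) := by
      field_simp
    rw [h2, eq_div_iff hL0]
    linear_combination (q0 - p0) * hdot
  · have h2 : (p1 + q1) / 2 + ((q0 - p0) * (x1 - p1) - (q1 - p1) * (x0 - p0)) /
        ((p0 - q0) ^ 2 + (p1 - q1) ^ 2) * (q0 - p0) =
        (((p0 - q0) ^ 2 + (p1 - q1) ^ 2) * ((p1 + q1) / 2) +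
          ((q0 - p0) * (x1 - p1) - (q1 - p1) * (x0 - p0)) * (q0 - p0)) /
        ((p0 - q0) ^ 2 + (p1 - q1) ^ 2) := by
      field_simp
    rw [h2, eq_div_iff hL0]
    linear_combination (q1 - p1) * hdot

theorem napoleon_inner
    (A B C A₁' B₁' C₁' : EuclideanSpace ℝ (Fin 2))
    (hABC : AffineIndependent ℝ ![A, B, C])
    (hA₁' : dist A₁' B = dist B C) (hA₁'2 : dist A₁' C = dist B C)
    (hB₁' : dist A B₁' = dist A C) (hB₁'2 : dist B₁' C = dist A C)
    (hC₁' : dist A C₁' = dist A B) (hC₁'2 : dist B C₁' = dist A B)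
    (hsideA' : (affineSpan ℝ {B, C}).SSameSide A₁' A)
    (hsideB' : (affineSpan ℝ {C, A}).SSameSide B₁' B)
    (hsideC' : (affineSpan ℝ {A, B}).SSameSide C₁' C)
    (G₁' G₂' G₃' : EuclideanSpace ℝ (Fin 2))
    (hG₁' : G₁' = (3:ℝ)⁻¹ • (A₁' + B + C))
    (hG₂' : G₂' = (3:ℝ)⁻¹ • (A + B₁' + C))
    (hG₃' : G₃' = (3:ℝ)⁻¹ • (A + B + C₁')) :
    (dist G₁' G₂' = dist G₂' G₃' ∧ dist G₂' G₃' = dist G₃' G₁') ∧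
      (3:ℝ)⁻¹ • (G₁' + G₂' + G₃') = (3:ℝ)⁻¹ • (A + B + C) := by
  have hBC : B ≠ C := by
    intro h
    exact (by decide : ¬(1 : Fin 3) = 2)
      (hABC.injective (show ![A, B, C] 1 = ![A, B, C] 2 by simp [h]))
  have hCA : C ≠ A := by
    intro h
    exact (by decide : ¬(2 : Fin 3) = 0)
      (hABC.injective (show ![A, B, C] 2 = ![A, B, C] 0 by simp [h]))
  have hAB : A ≠ B := by
    intro h
    exact (by decide : ¬(0 : Fin 3) = 1)
      (hABC.injective (show ![A, B, C] 0 = ![A, B, C] 1 by simp [h]))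
  have sa := cross_sign_of_sSameSide B C A₁' A hBC hsideA'
  have sb := cross_sign_of_sSameSide C A B₁' B hCA hsideB'
  have sc := cross_sign_of_sSameSide A B C₁' C hAB hsideC'
  -- squared distance equations
  have e1 : (A₁' 0 - B 0) ^ 2 + (A₁' 1 - B 1) ^ 2 = (B 0 - C 0) ^ 2 + (B 1 - C 1) ^ 2 := by
    have h : dist A₁' B ^ 2 = dist B C ^ 2 := by rw [hA₁']
    rwa [dist_sq_coords, dist_sq_coords] at h
  have e2 : (A₁' 0 - C 0) ^ 2 + (A₁' 1 - C 1) ^ 2 = (B 0 - C 0) ^ 2 + (B 1 - C 1) ^ 2 := by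
    have h : dist A₁' C ^ 2 = dist B C ^ 2 := by rw [hA₁'2]
    rwa [dist_sq_coords, dist_sq_coords] at h
  have e3 : (A 0 - B₁' 0) ^ 2 + (A 1 - B₁' 1) ^ 2 = (A 0 - C 0) ^ 2 + (A 1 - C 1) ^ 2 := by
    have h : dist A B₁' ^ 2 = dist A C ^ 2 := by rw [hB₁']
    rwa [dist_sq_coords, dist_sq_coords] at h
  have e4 : (B₁' 0 - C 0) ^ 2 + (B₁' 1 - C 1) ^ 2 = (A 0 - C 0) ^ 2 + (A 1 - C 1) ^ 2 := by
    have h : dist B₁' C ^ 2 = dist A C ^ 2 := by rw [hB₁'2]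
    rwa [dist_sq_coords, dist_sq_coords] at h
  have e5 : (A 0 - C₁' 0) ^ 2 + (A 1 - C₁' 1) ^ 2 = (A 0 - B 0) ^ 2 + (A 1 - B 1) ^ 2 := by
    have h : dist A C₁' ^ 2 = dist A B ^ 2 := by rw [hC₁']
    rwa [dist_sq_coords, dist_sq_coords] at h
  have e6 : (B 0 - C₁' 0) ^ 2 + (B 1 - C₁' 1) ^ 2 = (A 0 - B 0) ^ 2 + (A 1 - B 1) ^ 2 := by
    have h : dist B C₁' ^ 2 = dist A B ^ 2 := by rw [hC₁'2]
    rwa [dist_sq_coords, dist_sq_coords] at h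
  -- solve for the apexes
  obtain ⟨ta, hta2, hsa, hx0, hx1⟩ :=
    apex_solve (B 0) (B 1) (C 0) (C 1) (A₁' 0) (A₁' 1) (A 0) (A 1)
      e1 e2 sa
  obtain ⟨tb, htb2, hsb, hy0, hy1⟩ :=
    apex_solve (C 0) (C 1) (A 0) (A 1) (B₁' 0) (B₁' 1) (B 0) (B 1)
      (by linear_combination e4) (by linear_combination e3) sb
  obtain ⟨tc, htc2, hsc, hz0, hz1⟩ :=
    apex_solve (A 0) (A 1) (B 0) (B 1) (C₁' 0) (C₁' 1) (C 0) (C 1)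
      (by linear_combination e5) (by linear_combination e6) sc
  -- rewrite the sign conditions with a common determinant δ
  set δ := (C 0 - B 0) * (A 1 - B 1) - (C 1 - B 1) * (A 0 - B 0) with hδ
  have hsa' : 0 < ta * δ := hsa
  have hsb' : 0 < tb * δ := by
    have h : (A 0 - C 0) * (B 1 - C 1) - (A 1 - C 1) * (B 0 - C 0) = δ := by rw [hδ]; ring
    rw [← h]; exact hsb
  have hsc' : 0 < tc * δ := by
    have h : (B 0 - A 0) * (C 1 - A 1) - (B 1 - A 1) * (C 0 - A 0) = δ := by rw [hδ]; ring
    rw [← h]; exact hsc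
  -- all three parameters coincide
  have hab : tb = ta := by
    have h1 : (tb - ta) * (tb + ta) = 0 := by linear_combination htb2 - hta2
    rcases mul_eq_zero.mp h1 with h | h
    · linarith [sub_eq_zero.mp h]
    · exfalso
      have h2 : tb * δ + ta * δ = 0 := by linear_combination δ * h
      linarith
  have hac : tc = ta := by
    have h1 : (tc - ta) * (tc + ta) = 0 := by linear_combination htc2 - hta2
    rcases mul_eq_zero.mp h1 with h | h
    · linarith [sub_eq_zero.mp h]
    · exfalso
      have h2 : tc * δ + ta * δ = 0 := by linear_combination δ * h
      linarith
  rw [hab] at hy0 hy1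
  rw [hac] at hz0 hz1
  refine ⟨⟨?_, ?_⟩, ?_⟩
  · apply dist_eq_of_sq
    rw [dist_sq_coords, dist_sq_coords, hG₁', hG₂', hG₃']
    simp only [PiLp.smul_apply, PiLp.add_apply, smul_eq_mul]
    rw [hx0, hx1, hy0, hy1, hz0, hz1]
    linear_combination ((1/3) * (C 1)^2 + (1/3) * (C 0)^2 - (2/3) * (B 1) * (C 1)
      - (2/3) * (B 0) * (C 0) + (2/3) * (A 1) * (B 1) - (1/3) * (A 1)^2
      + (2/3) * (A 0) * (B 0) - (1/3) * (A 0)^2) * hta2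
  · apply dist_eq_of_sq
    rw [dist_sq_coords, dist_sq_coords, hG₂', hG₃', hG₁']
    simp only [PiLp.smul_apply, PiLp.add_apply, smul_eq_mul]
    rw [hx0, hx1, hy0, hy1, hz0, hz1]
    linear_combination ((2/3) * (B 1) * (C 1) - (1/3) * (B 1)^2 + (2/3) * (B 0) * (C 0)
      - (1/3) * (B 0)^2 - (2/3) * (A 1) * (C 1) + (1/3) * (A 1)^2
      - (2/3) * (A 0) * (C 0) + (1/3) * (A 0)^2) * hta2
  · rw [hG₁', hG₂', hG₃']
    ext i
    simp only [PiLp.smul_apply, PiLp.add_apply, smul_eq_mul]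
    fin_cases i
    · show (3:ℝ)⁻¹ * ((3:ℝ)⁻¹ * (A₁' 0 + B 0 + C 0) + (3:ℝ)⁻¹ * (A 0 + B₁' 0 + C 0)
        + (3:ℝ)⁻¹ * (A 0 + B 0 + C₁' 0)) = (3:ℝ)⁻¹ * (A 0 + B 0 + C 0)
      rw [hx0, hy0, hz0]; ring
    · show (3:ℝ)⁻¹ * ((3:ℝ)⁻¹ * (A₁' 1 + B 1 + C 1) + (3:ℝ)⁻¹ * (A 1 + B₁' 1 + C 1)
        + (3:ℝ)⁻¹ * (A 1 + B 1 + C₁' 1)) = (3:ℝ)⁻¹ * (A 1 + B 1 + C 1)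
      rw [hx1, hy1, hz1]; ring
end

section
/- Let A₁', B₁', C₁' be an overlapping Napoleon configuration for a nondegenerate triangle ABC in the Euclidean plane, and let G₁', G₂', G₃' be the centroids of A₁'BC, AB₁'C, ABC₁' respectively. Then the area of triangle G₁'G₂'G₃' equals one sixth of the sum of the areas of the three equilateral triangles minus one half of the area of triangle ABC: Area(G₁'G₂'G₃') = (1/6)·(Area(A₁'BC) + Area(AB₁'C) + Area(ABC₁')) − (1/2)·Area(ABC). -/
open EuclideanGeometry AffineSubspace MeasureTheory
open Set

noncomputable def triArea (X Y Z : EuclideanSpace ℝ (Fin 2)) : ℝ :=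
  (volume (convexHull ℝ {X, Y, Z})).toReal

lemma convex_T2 : Convex ℝ {p : ℝ × ℝ | 0 ≤ p.1 ∧ 0 ≤ p.2 ∧ p.1 + p.2 ≤ 1} := by
  rw [convex_iff_forall_pos]
  rintro ⟨x1, x2⟩ ⟨hx1, hx2, hx3⟩ ⟨y1, y2⟩ ⟨hy1, hy2, hy3⟩ a b ha hb hab
  simp only [Set.mem_setOf_eq, Prod.smul_fst, Prod.smul_snd, Prod.fst_add, Prod.snd_add,
    smul_eq_mul] at *
  refine ⟨by nlinarith, by nlinarith, by nlinarith⟩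

lemma T2_eq : {p : ℝ × ℝ | 0 ≤ p.1 ∧ 0 ≤ p.2 ∧ p.1 + p.2 ≤ 1} =
    convexHull ℝ {((0:ℝ),(0:ℝ)), (1,0), (0,1)} := by
  apply Subset.antisymm
  · rintro ⟨x, y⟩ ⟨hx, hy, hxy⟩
    have := Finset.centerMass_mem_convexHull (R := ℝ) (E := ℝ × ℝ)
      (s := {((0:ℝ),(0:ℝ)), (1,0), (0,1)}) (t := Finset.univ (α := Fin 3)) (w := ![1 - x - y, x, y])
      (z := ![((0:ℝ),(0:ℝ)), (1,0), (0,1)]) ?_ ?_ ?_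
    · convert this using 1
      rw [Finset.centerMass]
      simp [Fin.sum_univ_three, Prod.ext_iff]
      have h1 : 1 - x - y + x + y = 1 := by ring
      rw [h1]
      norm_num
    · intro i _
      fin_cases i <;> simp <;> linarith
    · simp [Fin.sum_univ_three]; linarith
    · intro i _
      fin_cases i <;> simp
  · apply convexHull_min _ convex_T2
    rintro p hp
    simp only [mem_insert_iff, mem_singleton_iff] at hp
    rcases hp with rfl | rfl | rfl <;> norm_num

lemma vol_T2 : volume {p : ℝ × ℝ | 0 ≤ p.1 ∧ 0 ≤ p.2 ∧ p.1 + p.2 ≤ 1} = ENNReal.ofReal (1/2) := by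
  have hmeas : MeasurableSet {p : ℝ × ℝ | 0 ≤ p.1 ∧ 0 ≤ p.2 ∧ p.1 + p.2 ≤ 1} := by
    apply MeasurableSet.inter
    · exact measurableSet_le measurable_const measurable_fst
    apply MeasurableSet.inter
    · exact measurableSet_le measurable_const measurable_snd
    · exact measurableSet_le (measurable_fst.add measurable_snd) measurable_const
  rw [Measure.volume_eq_prod, Measure.prod_apply hmeas]
  have hfib : ∀ x : ℝ, volume (Prod.mk x ⁻¹' {p : ℝ × ℝ | 0 ≤ p.1 ∧ 0 ≤ p.2 ∧ p.1 + p.2 ≤ 1})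
      = Set.indicator (Icc (0:ℝ) 1) (fun x => ENNReal.ofReal (1 - x)) x := by
    intro x
    rcases le_or_gt 0 x with hx | hx
    · have : Prod.mk x ⁻¹' {p : ℝ × ℝ | 0 ≤ p.1 ∧ 0 ≤ p.2 ∧ p.1 + p.2 ≤ 1} = Icc 0 (1 - x) := by
        ext y; simp [hx]; intro _; constructor <;> intro <;> linarith
      rw [this, Real.volume_Icc]
      rcases le_or_gt x 1 with hx1 | hx1
      · rw [indicator_of_mem (by exact ⟨hx, hx1⟩)]
        norm_num
      · rw [indicator_of_notMem (by simp; intro; linarith)]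
        rw [ENNReal.ofReal_eq_zero.2 (by linarith)]
    · have : Prod.mk x ⁻¹' {p : ℝ × ℝ | 0 ≤ p.1 ∧ 0 ≤ p.2 ∧ p.1 + p.2 ≤ 1} = ∅ := by
        ext y; simp; intro h; linarith
      rw [this, measure_empty, indicator_of_notMem (by simp; intro; linarith)]
  simp only [hfib]
  rw [lintegral_indicator measurableSet_Icc]
  rw [← ofReal_integral_eq_lintegral_ofReal]
  · congr 1
    rw [integral_Icc_eq_integral_Ioc, ← intervalIntegral.integral_of_le (by norm_num : (0:ℝ) ≤ 1)]
    rw [intervalIntegral.integral_sub intervalIntegrable_const intervalIntegral.intervalIntegrable_id]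
    simp [integral_id]
    norm_num
  · exact (continuous_const.sub continuous_id).integrableOn_Icc
  · filter_upwards [self_mem_ae_restrict measurableSet_Icc] with x hx
    simp at hx ⊢; linarith [hx.2]

noncomputable def ellMap : EuclideanSpace ℝ (Fin 2) →ₗ[ℝ] ℝ × ℝ where
  toFun p := (p 0, p 1)
  map_add' p q := by simp
  map_smul' c p := by simp

lemma ellMap_inj : Function.Injective (⇑ellMap) := by
  intro p q hpq
  have h0 : p 0 = q 0 := congrArg Prod.fst hpq
  have h1 : p 1 = q 1 := congrArg Prod.snd hpq
  ext i
  fin_cases i <;> assumption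

lemma vol_image_ell (s : Set (EuclideanSpace ℝ (Fin 2))) :
    volume s = volume (ellMap '' s) := by
  have h := (volume_preserving_finTwoArrow ℝ).comp
    (EuclideanSpace.volume_preserving_symm_measurableEquiv_toLp (Fin 2))
  have hemb : MeasurableEmbedding
      (⇑(MeasurableEquiv.finTwoArrow (α := ℝ)) ∘ ⇑(MeasurableEquiv.toLp 2 (Fin 2 → ℝ)).symm) := by
    have := ((MeasurableEquiv.toLp 2 (Fin 2 → ℝ)).symm.trans
      (MeasurableEquiv.finTwoArrow (α := ℝ))).measurableEmbedding
    simpa [MeasurableEquiv.coe_trans] using this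
  have key := h.measure_preimage_emb hemb (ellMap '' s)
  have hcoe : (⇑(MeasurableEquiv.finTwoArrow (α := ℝ)) ∘ ⇑(MeasurableEquiv.toLp 2 (Fin 2 → ℝ)).symm)
      = ⇑ellMap := by funext p; rfl
  rw [hcoe] at key
  rw [← key, Set.preimage_image_eq _ ellMap_inj]



lemma vol_T : volume (convexHull ℝ
    {(0 : EuclideanSpace ℝ (Fin 2)), (WithLp.equiv 2 (Fin 2 → ℝ)).symm ![1,0],
      (WithLp.equiv 2 (Fin 2 → ℝ)).symm ![0,1]}) = ENNReal.ofReal (1/2) := by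
  rw [vol_image_ell, ellMap.image_convexHull]
  have himg : ⇑ellMap '' {(0 : EuclideanSpace ℝ (Fin 2)), (WithLp.equiv 2 (Fin 2 → ℝ)).symm ![1,0],
      (WithLp.equiv 2 (Fin 2 → ℝ)).symm ![0,1]} = {((0:ℝ),(0:ℝ)), (1,0), (0,1)} := by
    rw [Set.image_insert_eq, Set.image_insert_eq, Set.image_singleton]
    have e0 : ellMap (0 : EuclideanSpace ℝ (Fin 2)) = ((0:ℝ),(0:ℝ)) := by
      rw [map_zero]; rfl
    have e1 : ellMap ((WithLp.equiv 2 (Fin 2 → ℝ)).symm ![1,0]) = ((1:ℝ),(0:ℝ)) := rfl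
    have e2 : ellMap ((WithLp.equiv 2 (Fin 2 → ℝ)).symm ![0,1]) = ((0:ℝ),(1:ℝ)) := rfl
    rw [e0, e1, e2]
  rw [himg, ← T2_eq, vol_T2]

lemma triArea_eq (X Y Z : EuclideanSpace ℝ (Fin 2)) :
    triArea X Y Z = |(Y 0 - X 0) * (Z 1 - X 1) - (Y 1 - X 1) * (Z 0 - X 0)| / 2 := by
  classical
  set M : Matrix (Fin 2) (Fin 2) ℝ := !![Y 0 - X 0, Z 0 - X 0; Y 1 - X 1, Z 1 - X 1] with hM
  set L : EuclideanSpace ℝ (Fin 2) →ₗ[ℝ] EuclideanSpace ℝ (Fin 2) := Matrix.toEuclideanLin M with hL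
  have hdet : LinearMap.det L = (Y 0 - X 0) * (Z 1 - X 1) - (Y 1 - X 1) * (Z 0 - X 0) := by
    rw [hL, Matrix.toEuclideanLin_eq_toLin, LinearMap.det_toLin, hM, Matrix.det_fin_two_of]; ring
  set g : EuclideanSpace ℝ (Fin 2) →ᵃ[ℝ] EuclideanSpace ℝ (Fin 2) :=
    (AffineEquiv.constVAdd ℝ (EuclideanSpace ℝ (Fin 2)) X).toAffineMap.comp L.toAffineMap with hg
  have hgapp : ∀ p, g p = X + L p := fun p => rfl
  set v₀ : EuclideanSpace ℝ (Fin 2) := 0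
  set v₁ : EuclideanSpace ℝ (Fin 2) := (WithLp.equiv 2 (Fin 2 → ℝ)).symm ![1,0]
  set v₂ : EuclideanSpace ℝ (Fin 2) := (WithLp.equiv 2 (Fin 2 → ℝ)).symm ![0,1]
  have himg : ⇑g '' {v₀, v₁, v₂} = {X, Y, Z} := by
    rw [Set.image_insert_eq, Set.image_insert_eq, Set.image_singleton]
    have h0 : g v₀ = X := by
      rw [hgapp, show v₀ = 0 from rfl, map_zero, add_zero]
    have h1 : g v₁ = Y := by
      rw [hgapp]
      ext i
      have : L v₁ = (WithLp.equiv 2 (Fin 2 → ℝ)).symm (Matrix.mulVec M ![1,0]) := rfl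
      rw [this]
      fin_cases i <;>
        simp [Matrix.mulVec, dotProduct, Fin.sum_univ_two, hM]
    have h2 : g v₂ = Z := by
      rw [hgapp]
      ext i
      have : L v₂ = (WithLp.equiv 2 (Fin 2 → ℝ)).symm (Matrix.mulVec M ![0,1]) := rfl
      rw [this]
      fin_cases i <;>
        simp [Matrix.mulVec, dotProduct, Fin.sum_univ_two, hM]
    rw [h0, h1, h2]
  have hvol : volume (convexHull ℝ ({X, Y, Z} : Set (EuclideanSpace ℝ (Fin 2))))
      = ENNReal.ofReal |LinearMap.det L| * ENNReal.ofReal (1/2) := by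
    rw [← himg, ← AffineMap.image_convexHull]
    have hcoe : ⇑g = (fun w => X + w) ∘ ⇑L := rfl
    rw [hcoe, Set.image_comp, Set.image_add_left, measure_preimage_add,
      Measure.addHaar_image_linearMap, vol_T]
  rw [triArea, hvol, hdet]
  rw [← ENNReal.ofReal_mul (abs_nonneg _)]
  rw [ENNReal.toReal_ofReal (by positivity)]
  ring

lemma apex_coords (b0 b1 c0 c1 a0 a1 : ℝ)
    (hq : (c0 - b0)^2 + (c1 - b1)^2 ≠ 0)
    (h1 : (a0 - b0)^2 + (a1 - b1)^2 = (b0 - c0)^2 + (b1 - c1)^2)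
    (h2 : (a0 - c0)^2 + (a1 - c1)^2 = (b0 - c0)^2 + (b1 - c1)^2) :
    ∃ t : ℝ, t^2 = 3/4 ∧ a0 = (b0 + c0)/2 - t*(c1 - b1) ∧ a1 = (b1 + c1)/2 + t*(c0 - b0) := by
  have hs : (a0 - (b0 + c0)/2)*(c0 - b0) + (a1 - (b1 + c1)/2)*(c1 - b1) = 0 := by
    linear_combination (1/2)*h1 - (1/2)*h2
  have hw : (a0 - (b0+c0)/2)^2 + (a1 - (b1+c1)/2)^2 = 3/4*((c0 - b0)^2 + (c1 - b1)^2) := by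
    linear_combination h1 - hs
  have hN2 : ((c0 - b0)*(a1 - (b1 + c1)/2) - (c1 - b1)*(a0 - (b0 + c0)/2))^2
      = 3/4*((c0 - b0)^2 + (c1 - b1)^2)^2 := by
    linear_combination ((c0 - b0)^2 + (c1 - b1)^2)*hw -
      ((a0 - (b0 + c0)/2)*(c0 - b0) + (a1 - (b1 + c1)/2)*(c1 - b1))*hs
  set t := ((c0 - b0)*(a1 - (b1 + c1)/2) - (c1 - b1)*(a0 - (b0 + c0)/2)) /
    ((c0 - b0)^2 + (c1 - b1)^2) with htdef
  have hNq : (c0 - b0)*(a1 - (b1 + c1)/2) - (c1 - b1)*(a0 - (b0 + c0)/2)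
      = t*((c0 - b0)^2 + (c1 - b1)^2) := by
    rw [htdef, div_mul_cancel₀ _ hq]
  refine ⟨t, ?_, ?_, ?_⟩
  · have hcan : t^2 * ((c0 - b0)^2 + (c1 - b1)^2)^2
        = 3/4 * ((c0 - b0)^2 + (c1 - b1)^2)^2 := by
      linear_combination hN2 - (((c0 - b0)*(a1 - (b1 + c1)/2) - (c1 - b1)*(a0 - (b0 + c0)/2))
        + t*((c0 - b0)^2 + (c1 - b1)^2))*hNq
    exact mul_right_cancel₀ (pow_ne_zero 2 hq) hcan
  · refine mul_left_cancel₀ hq ?_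
    linear_combination (c0 - b0)*hs - (c1 - b1)*hNq
  · refine mul_left_cancel₀ hq ?_
    linear_combination (c1 - b1)*hs + (c0 - b0)*hNq

lemma mem_line_of_det_eq_zero (B C R : EuclideanSpace ℝ (Fin 2))
    (hq : (C 0 - B 0)^2 + (C 1 - B 1)^2 ≠ 0)
    (hR : (C 0 - B 0)*(R 1 - B 1) - (C 1 - B 1)*(R 0 - B 0) = 0) :
    R ∈ affineSpan ℝ {B, C} := by
  have key : (R - B) +ᵥ B ∈ line[ℝ, B, C] := by
    rw [vadd_left_mem_affineSpan_pair]
    refine ⟨((R 0 - B 0)*(C 0 - B 0) + (R 1 - B 1)*(C 1 - B 1)) /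
      ((C 0 - B 0)^2 + (C 1 - B 1)^2), ?_⟩
    ext i
    simp only [PiLp.smul_apply, smul_eq_mul, vsub_eq_sub, PiLp.sub_apply]
    have e0 : ((R 0 - B 0)*(C 0 - B 0) + (R 1 - B 1)*(C 1 - B 1)) /
        ((C 0 - B 0)^2 + (C 1 - B 1)^2) * (C 0 - B 0) = R 0 - B 0 := by
      rw [div_mul_eq_mul_div, div_eq_iff hq]
      linear_combination (C 1 - B 1)*hR
    have e1 : ((R 0 - B 0)*(C 0 - B 0) + (R 1 - B 1)*(C 1 - B 1)) /
        ((C 0 - B 0)^2 + (C 1 - B 1)^2) * (C 1 - B 1) = R 1 - B 1 := by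
      rw [div_mul_eq_mul_div, div_eq_iff hq]
      linear_combination (-(C 0 - B 0))*hR
    fin_cases i
    · exact e0
    · exact e1
  simpa using key

set_option maxHeartbeats 1000000 in
lemma side_sign (B C P Q : EuclideanSpace ℝ (Fin 2))
    (hq : (C 0 - B 0)^2 + (C 1 - B 1)^2 ≠ 0)
    (h : (affineSpan ℝ {B, C}).SSameSide P Q) :
    0 < ((C 0 - B 0)*(P 1 - B 1) - (C 1 - B 1)*(P 0 - B 0)) *
        ((C 0 - B 0)*(Q 1 - B 1) - (C 1 - B 1)*(Q 0 - B 0)) := by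
  rw [AffineSubspace.sSameSide_iff_exists_left (left_mem_affineSpan_pair ℝ B C)] at h
  obtain ⟨hP, hQ, p₂, hp₂, hray⟩ := h
  have hPd : (C 0 - B 0)*(P 1 - B 1) - (C 1 - B 1)*(P 0 - B 0) ≠ 0 :=
    fun h0 => hP (mem_line_of_det_eq_zero B C P hq h0)
  have hQd : (C 0 - B 0)*(Q 1 - B 1) - (C 1 - B 1)*(Q 0 - B 0) ≠ 0 :=
    fun h0 => hQ (mem_line_of_det_eq_zero B C Q hq h0)
  have hp₂' : (p₂ -ᵥ B) +ᵥ B ∈ line[ℝ, B, C] := by rw [vsub_vadd]; exact hp₂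
  rw [vadd_left_mem_affineSpan_pair] at hp₂'
  obtain ⟨r, hr⟩ := hp₂'
  have hPB : P -ᵥ B ≠ 0 := vsub_ne_zero.mpr (fun h0 => hP (h0 ▸ left_mem_affineSpan_pair ℝ B C))
  have hQp : Q -ᵥ p₂ ≠ 0 := vsub_ne_zero.mpr (fun h0 => hQ (h0 ▸ hp₂))
  obtain ⟨r₁, r₂, hr₁, hr₂, hre⟩ := hray.exists_pos hPB hQp
  have c0 := congrArg (fun v : EuclideanSpace ℝ (Fin 2) => v 0) hre
  have c1 := congrArg (fun v : EuclideanSpace ℝ (Fin 2) => v 1) hre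
  have d0 := congrArg (fun v : EuclideanSpace ℝ (Fin 2) => v 0) hr
  have d1 := congrArg (fun v : EuclideanSpace ℝ (Fin 2) => v 1) hr
  simp only [PiLp.smul_apply, smul_eq_mul, vsub_eq_sub, PiLp.sub_apply] at c0 c1 d0 d1
  have key : r₁ * ((C 0 - B 0)*(P 1 - B 1) - (C 1 - B 1)*(P 0 - B 0))
      = r₂ * ((C 0 - B 0)*(Q 1 - B 1) - (C 1 - B 1)*(Q 0 - B 0)) := by
    linear_combination (C 0 - B 0)*c1 - (C 1 - B 1)*c0 + r₂*(C 0 - B 0)*d1 - r₂*(C 1 - B 1)*d0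
  have hQ2 : 0 < ((C 0 - B 0)*(Q 1 - B 1) - (C 1 - B 1)*(Q 0 - B 0))^2 :=
    lt_of_le_of_ne (sq_nonneg _) (Ne.symm (pow_ne_zero 2 hQd))
  have h3 : ((C 0 - B 0)*(P 1 - B 1) - (C 1 - B 1)*(P 0 - B 0)) *
      ((C 0 - B 0)*(Q 1 - B 1) - (C 1 - B 1)*(Q 0 - B 0)) * r₁
      = r₂ * ((C 0 - B 0)*(Q 1 - B 1) - (C 1 - B 1)*(Q 0 - B 0))^2 := by
    linear_combination ((C 0 - B 0)*(Q 1 - B 1) - (C 1 - B 1)*(Q 0 - B 0))*key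
  nlinarith [h3, mul_pos hr₂ hQ2, hr₁]

lemma dist_sq (x y : EuclideanSpace ℝ (Fin 2)) :
    dist x y ^ 2 = (x 0 - y 0)^2 + (x 1 - y 1)^2 := by
  rw [EuclideanSpace.dist_eq, Real.sq_sqrt (by positivity)]
  simp [Fin.sum_univ_two, Real.dist_eq, sq_abs]

lemma weitz (qa qb qc d t : ℝ) (hqa : 0 ≤ qa) (hqb : 0 ≤ qb) (hqc : 0 ≤ qc)
    (hheron : 2*(qa*qb + qb*qc + qa*qc) - (qa^2 + qb^2 + qc^2) = 4*d^2)
    (ht : t^2 = 3/4) (htpos : 0 < t) (hdpos : 0 < d) : 3*d ≤ t*(qa+qb+qc) := by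
  have hS2 : 12*d^2 ≤ (qa+qb+qc)^2 := by
    nlinarith [sq_nonneg (qa-qb), sq_nonneg (qb-qc), sq_nonneg (qa-qc)]
  have hX : t^2*(qa+qb+qc)^2 = 3/4*(qa+qb+qc)^2 := by
    linear_combination (qa+qb+qc)^2 * ht
  have hS : 0 ≤ t*(qa+qb+qc) := mul_nonneg htpos.le (by linarith)
  nlinarith [hS2, hX, hS, hdpos]

lemma pos_helper (t q d : ℝ) (hq : 0 < q) (h : 0 < t * q * d) : 0 < t * d := by
  nlinarith

lemma coords_eq (P Q : EuclideanSpace ℝ (Fin 2))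
    (h : (Q 0 - P 0)^2 + (Q 1 - P 1)^2 = 0) : P = Q := by
  have h0 : P 0 = Q 0 := by nlinarith [sq_nonneg (Q 0 - P 0), sq_nonneg (Q 1 - P 1)]
  have h1 : P 1 = Q 1 := by nlinarith [sq_nonneg (Q 0 - P 0), sq_nonneg (Q 1 - P 1)]
  ext i; fin_cases i
  · exact h0
  · exact h1

lemma t_eq (t₁ t₂ d : ℝ) (ht₁ : t₁^2 = 3/4) (ht₂ : t₂^2 = 3/4)
    (h1 : 0 < t₁ * d) (h2 : 0 < t₂ * d) : t₂ = t₁ := by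
  have hz : (t₁ - t₂)*(t₁ + t₂) = 0 := by linear_combination ht₁ - ht₂
  rcases mul_eq_zero.1 hz with h | h
  · linarith [sub_eq_zero.1 h]
  · exfalso
    have h' : t₂ * d = -(t₁ * d) := by linear_combination d * h
    linarith

lemma final_abs (qa qb qc d t : ℝ) (hqa : 0 < qa) (hqb : 0 < qb) (hqc : 0 < qc)
    (ht : t^2 = 3/4) (htd : 0 < t * d)
    (hheron : 2*(qa*qb + qb*qc + qa*qc) - (qa^2 + qb^2 + qc^2) = 4*d^2) :
    |d/2 - t*(qa + qb + qc)/6| / 2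
      = 1/6 * (|t| * qa / 2 + |t| * qb / 2 + |t| * qc / 2) - 1/2 * (|d| / 2) := by
  have hd : d ≠ 0 := by
    rintro rfl
    simp at htd
  rcases lt_or_gt_of_ne hd with hdneg | hdpos
  · have htneg : t < 0 := by nlinarith [htd]
    have hW : 3*(-d) ≤ (-t)*(qa+qb+qc) :=
      weitz qa qb qc (-d) (-t) hqa.le hqb.le hqc.le
        (by linear_combination hheron) (by linear_combination ht) (by linarith) (by linarith)
    rw [abs_of_nonneg (by linarith : (0:ℝ) ≤ d/2 - t*(qa+qb+qc)/6),
      abs_of_neg htneg, abs_of_neg hdneg]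
    ring
  · have htpos : 0 < t := by nlinarith [htd]
    have hW : 3*d ≤ t*(qa+qb+qc) :=
      weitz qa qb qc d t hqa.le hqb.le hqc.le hheron ht htpos hdpos
    rw [abs_of_nonpos (by linarith : d/2 - t*(qa+qb+qc)/6 ≤ 0),
      abs_of_pos htpos, abs_of_pos hdpos]
    ring

set_option maxHeartbeats 4000000 in
theorem napoleon_inner_area
    (A B C A₁' B₁' C₁' : EuclideanSpace ℝ (Fin 2))
    (hABC : AffineIndependent ℝ ![A, B, C])
    (hA₁' : dist A₁' B = dist B C) (hA₁'2 : dist A₁' C = dist B C)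
    (hB₁' : dist A B₁' = dist A C) (hB₁'2 : dist B₁' C = dist A C)
    (hC₁' : dist A C₁' = dist A B) (hC₁'2 : dist B C₁' = dist A B)
    (hsideA' : (affineSpan ℝ {B, C}).SSameSide A₁' A)
    (hsideB' : (affineSpan ℝ {C, A}).SSameSide B₁' B)
    (hsideC' : (affineSpan ℝ {A, B}).SSameSide C₁' C)
    (G₁' G₂' G₃' : EuclideanSpace ℝ (Fin 2))
    (hG₁' : G₁' = (3:ℝ)⁻¹ • (A₁' + B + C))
    (hG₂' : G₂' = (3:ℝ)⁻¹ • (A + B₁' + C))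
    (hG₃' : G₃' = (3:ℝ)⁻¹ • (A + B + C₁')) :
    triArea G₁' G₂' G₃' =
      (1/6) * (triArea A₁' B C + triArea A B₁' C + triArea A B C₁') -
        (1/2) * triArea A B C := by
  have hinj := hABC.injective
  -- pairwise distinct
  have hAB : A ≠ B := by
    intro h
    have h01 : (0 : Fin 3) = 1 := hinj (by simp [h])
    exact absurd h01 (by decide)
  have hBC : B ≠ C := by
    intro h
    have h12 : (1 : Fin 3) = 2 := hinj (by simp [h])
    exact absurd h12 (by decide)
  have hCA : C ≠ A := by
    intro h
    have h20 : (2 : Fin 3) = 0 := hinj (by simp [h])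
    exact absurd h20 (by decide)
  -- nonzero squared side lengths
  have hqa : (C 0 - B 0)^2 + (C 1 - B 1)^2 ≠ 0 := by
    intro h0
    exact hBC (coords_eq B C h0)
  have hqb : (A 0 - C 0)^2 + (A 1 - C 1)^2 ≠ 0 := by
    intro h0
    exact hCA (coords_eq C A h0)
  have hqc : (B 0 - A 0)^2 + (B 1 - A 1)^2 ≠ 0 := by
    intro h0
    exact hAB (coords_eq A B h0)
  -- nondegeneracy: determinant nonzero
  have hd : (B 0 - A 0)*(C 1 - A 1) - (B 1 - A 1)*(C 0 - A 0) ≠ 0 := by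
    intro h0
    have hCmem : C ∈ affineSpan ℝ {A, B} := mem_line_of_det_eq_zero A B C hqc h0
    have hcol : Collinear ℝ ({C, A, B} : Set (EuclideanSpace ℝ (Fin 2))) :=
      collinear_insert_of_mem_affineSpan_pair hCmem
    rw [affineIndependent_iff_not_collinear] at hABC
    apply hABC
    refine Collinear.subset ?_ hcol
    rintro x ⟨i, rfl⟩
    fin_cases i <;> simp
  -- squared distance equations
  have sqA1 : (A₁' 0 - B 0)^2 + (A₁' 1 - B 1)^2 = (B 0 - C 0)^2 + (B 1 - C 1)^2 := by
    have e := congrArg (fun z : ℝ => z^2) hA₁'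
    simp only [dist_sq] at e
    linear_combination e
  have sqA2 : (A₁' 0 - C 0)^2 + (A₁' 1 - C 1)^2 = (B 0 - C 0)^2 + (B 1 - C 1)^2 := by
    have e := congrArg (fun z : ℝ => z^2) hA₁'2
    simp only [dist_sq] at e
    linear_combination e
  have sqB1 : (B₁' 0 - C 0)^2 + (B₁' 1 - C 1)^2 = (C 0 - A 0)^2 + (C 1 - A 1)^2 := by
    have e := congrArg (fun z : ℝ => z^2) hB₁'2
    simp only [dist_sq] at e
    linear_combination e
  have sqB2 : (B₁' 0 - A 0)^2 + (B₁' 1 - A 1)^2 = (C 0 - A 0)^2 + (C 1 - A 1)^2 := by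
    have e := congrArg (fun z : ℝ => z^2) hB₁'
    simp only [dist_sq] at e
    linear_combination e
  have sqC1 : (C₁' 0 - A 0)^2 + (C₁' 1 - A 1)^2 = (A 0 - B 0)^2 + (A 1 - B 1)^2 := by
    have e := congrArg (fun z : ℝ => z^2) hC₁'
    simp only [dist_sq] at e
    linear_combination e
  have sqC2 : (C₁' 0 - B 0)^2 + (C₁' 1 - B 1)^2 = (A 0 - B 0)^2 + (A 1 - B 1)^2 := by
    have e := congrArg (fun z : ℝ => z^2) hC₁'2
    simp only [dist_sq] at e
    linear_combination e
  -- apex coordinates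
  obtain ⟨t₁, ht₁, ha0, ha1⟩ := apex_coords (B 0) (B 1) (C 0) (C 1) (A₁' 0) (A₁' 1) hqa sqA1 sqA2
  obtain ⟨t₂, ht₂, hb0, hb1⟩ := apex_coords (C 0) (C 1) (A 0) (A 1) (B₁' 0) (B₁' 1) hqb sqB1 sqB2
  obtain ⟨t₃, ht₃, hc0, hc1⟩ := apex_coords (A 0) (A 1) (B 0) (B 1) (C₁' 0) (C₁' 1) hqc sqC1 sqC2
  -- side conditions give sign information
  have s1 := side_sign B C A₁' A hqa hsideA'
  have s2 := side_sign C A B₁' B hqb hsideB'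
  have s3 := side_sign A B C₁' C hqc hsideC'
  have e1 : (C 0 - B 0)*(A₁' 1 - B 1) - (C 1 - B 1)*(A₁' 0 - B 0)
      = t₁ * ((C 0 - B 0)^2 + (C 1 - B 1)^2) := by rw [ha0, ha1]; ring
  have f1 : (C 0 - B 0)*(A 1 - B 1) - (C 1 - B 1)*(A 0 - B 0)
      = (B 0 - A 0)*(C 1 - A 1) - (B 1 - A 1)*(C 0 - A 0) := by ring
  rw [e1, f1] at s1
  have e2 : (A 0 - C 0)*(B₁' 1 - C 1) - (A 1 - C 1)*(B₁' 0 - C 0)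
      = t₂ * ((A 0 - C 0)^2 + (A 1 - C 1)^2) := by rw [hb0, hb1]; ring
  have f2 : (A 0 - C 0)*(B 1 - C 1) - (A 1 - C 1)*(B 0 - C 0)
      = (B 0 - A 0)*(C 1 - A 1) - (B 1 - A 1)*(C 0 - A 0) := by ring
  rw [e2, f2] at s2
  have e3 : (B 0 - A 0)*(C₁' 1 - A 1) - (B 1 - A 1)*(C₁' 0 - A 0)
      = t₃ * ((B 0 - A 0)^2 + (B 1 - A 1)^2) := by rw [hc0, hc1]; ring
  rw [e3] at s3
  have hqa_pos : 0 < (C 0 - B 0)^2 + (C 1 - B 1)^2 :=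
    lt_of_le_of_ne (by positivity) (Ne.symm hqa)
  have hqb_pos : 0 < (A 0 - C 0)^2 + (A 1 - C 1)^2 :=
    lt_of_le_of_ne (by positivity) (Ne.symm hqb)
  have hqc_pos : 0 < (B 0 - A 0)^2 + (B 1 - A 1)^2 :=
    lt_of_le_of_ne (by positivity) (Ne.symm hqc)
  -- all three t's are equal
  have td1 := pos_helper _ _ _ hqa_pos s1
  have td2 := pos_helper _ _ _ hqb_pos s2
  have td3 := pos_helper _ _ _ hqc_pos s3
  have ht12 : t₂ = t₁ := t_eq t₁ t₂ _ ht₁ ht₂ td1 td2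
  have ht13 : t₃ = t₁ := t_eq t₁ t₃ _ ht₁ ht₃ td1 td3
  -- areas of the four triangles
  have ar1 : triArea A₁' B C
      = |t₁| * ((C 0 - B 0)^2 + (C 1 - B 1)^2) / 2 := by
    rw [triArea_eq]
    have h : (B 0 - A₁' 0) * (C 1 - A₁' 1) - (B 1 - A₁' 1) * (C 0 - A₁' 0)
        = t₁ * ((C 0 - B 0)^2 + (C 1 - B 1)^2) := by rw [ha0, ha1]; ring
    rw [h, abs_mul, abs_of_nonneg (by positivity : (0:ℝ) ≤ (C 0 - B 0)^2 + (C 1 - B 1)^2)]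
  have ar2 : triArea A B₁' C
      = |t₁| * ((A 0 - C 0)^2 + (A 1 - C 1)^2) / 2 := by
    rw [triArea_eq]
    have h : (B₁' 0 - A 0) * (C 1 - A 1) - (B₁' 1 - A 1) * (C 0 - A 0)
        = t₁ * ((A 0 - C 0)^2 + (A 1 - C 1)^2) := by rw [hb0, hb1, ht12]; ring
    rw [h, abs_mul, abs_of_nonneg (by positivity : (0:ℝ) ≤ (A 0 - C 0)^2 + (A 1 - C 1)^2)]
  have ar3 : triArea A B C₁'
      = |t₁| * ((B 0 - A 0)^2 + (B 1 - A 1)^2) / 2 := by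
    rw [triArea_eq]
    have h : (B 0 - A 0) * (C₁' 1 - A 1) - (B 1 - A 1) * (C₁' 0 - A 0)
        = t₁ * ((B 0 - A 0)^2 + (B 1 - A 1)^2) := by rw [hc0, hc1, ht13]; ring
    rw [h, abs_mul, abs_of_nonneg (by positivity : (0:ℝ) ≤ (B 0 - A 0)^2 + (B 1 - A 1)^2)]
  have ar4 : triArea A B C
      = |(B 0 - A 0)*(C 1 - A 1) - (B 1 - A 1)*(C 0 - A 0)| / 2 := by
    rw [triArea_eq]
  -- area of the centroid triangle
  have g10 : G₁' 0 = 3⁻¹ * (A₁' 0 + B 0 + C 0) := by rw [hG₁']; rfl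
  have g11 : G₁' 1 = 3⁻¹ * (A₁' 1 + B 1 + C 1) := by rw [hG₁']; rfl
  have g20 : G₂' 0 = 3⁻¹ * (A 0 + B₁' 0 + C 0) := by rw [hG₂']; rfl
  have g21 : G₂' 1 = 3⁻¹ * (A 1 + B₁' 1 + C 1) := by rw [hG₂']; rfl
  have g30 : G₃' 0 = 3⁻¹ * (A 0 + B 0 + C₁' 0) := by rw [hG₃']; rfl
  have g31 : G₃' 1 = 3⁻¹ * (A 1 + B 1 + C₁' 1) := by rw [hG₃']; rfl
  have ar0 : triArea G₁' G₂' G₃'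
      = |((B 0 - A 0)*(C 1 - A 1) - (B 1 - A 1)*(C 0 - A 0))/2
          - t₁*(((C 0 - B 0)^2 + (C 1 - B 1)^2) + ((A 0 - C 0)^2 + (A 1 - C 1)^2)
              + ((B 0 - A 0)^2 + (B 1 - A 1)^2))/6| / 2 := by
    rw [triArea_eq]
    congr 2
    rw [g10, g11, g20, g21, g30, g31, ha0, ha1, hb0, hb1, hc0, hc1, ht12, ht13]
    linear_combination (((B 0 - A 0)*(C 1 - A 1) - (B 1 - A 1)*(C 0 - A 0))/3) * ht₁
  have hheron : 2*(((C 0 - B 0)^2 + (C 1 - B 1)^2)*((A 0 - C 0)^2 + (A 1 - C 1)^2)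
        + ((A 0 - C 0)^2 + (A 1 - C 1)^2)*((B 0 - A 0)^2 + (B 1 - A 1)^2)
        + ((C 0 - B 0)^2 + (C 1 - B 1)^2)*((B 0 - A 0)^2 + (B 1 - A 1)^2))
      - (((C 0 - B 0)^2 + (C 1 - B 1)^2)^2 + ((A 0 - C 0)^2 + (A 1 - C 1)^2)^2
        + ((B 0 - A 0)^2 + (B 1 - A 1)^2)^2)
      = 4*((B 0 - A 0)*(C 1 - A 1) - (B 1 - A 1)*(C 0 - A 0))^2 := by ring
  rw [ar0, ar1, ar2, ar3, ar4]
  exact final_abs _ _ _ _ _ hqa_pos hqb_pos hqc_pos ht₁ td1 hheron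
end
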